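/- Let $\alpha > 0$ and let $s$ be a positive integer. Let $x \in \mathbb{R}^N$ have block structure with $\|x\|_{2,\infty} \le \alpha$ and $\|x\|_{2,\mathcal{I}} \le s\alpha$. Then $x$ can be written as a convex combination $x = \sum_i \lambda_i u_i$ where each $u_i$ is block $s$-sparse with $\mathrm{supp}(u_i) \subseteq \mathrm{supp}(x)$, $\|u_i\|_{2,\mathcal{I}} = \|x\|_{2,\mathcal{I}}$, $\|u_i\|_{2,\infty} \le \alpha$, $0 \le \lambda_i \le 1$, $\sum_i \lambda_i = 1$, and moreover $\sum_i \lambda_i \|u_i\|_{2,2}^2 \le s \alpha^2$. -/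

import Mathlib

open Finset

/-- The space of block-structured vectors in `ℝ^N`, where `N = d 0 + ⋯ + d (l-1)`:
block `i` lives in `ℝ^(d i)` and the whole space carries the `ℓ₂` norm. -/
abbrev BlockVec {l : ℕ} (d : Fin l → ℕ) :=
  PiLp 2 (fun i : Fin l => EuclideanSpace ℝ (Fin (d i)))

/-- `x` is block `s`-sparse: at most `s` nonzero blocks. -/
def BlockSparse {l : ℕ} {d : Fin l → ℕ} (s : ℕ) (x : BlockVec d) : Prop :=
  ∃ S : Finset (Fin l), S.card ≤ s ∧ ∀ i ∉ S, x i = 0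

/-- The mixed `ℓ₂/ℓ₁` norm `‖x‖_{2,ℐ} = ∑ i, ‖x[i]‖₂`. -/
noncomputable def blockL1 {l : ℕ} {d : Fin l → ℕ} (x : BlockVec d) : ℝ :=
  ∑ i, ‖x i‖

/-- `x_S`: keep the blocks indexed by `S`, zero out the rest. -/
def blockRestrict {l : ℕ} {d : Fin l → ℕ} (x : BlockVec d) (S : Finset (Fin l)) :
    BlockVec d := WithLp.toLp 2 (fun i => if i ∈ S then x i else 0)

open scoped Classical in
noncomputable def fracSet {l : ℕ} {d : Fin l → ℕ} (α : ℝ) (x : BlockVec d) : Finset (Fin l) :=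
  Finset.univ.filter (fun i => x i ≠ 0 ∧ ‖x i‖ < α)

lemma sum_two_update {l : ℕ} (f : Fin l → ℝ) (i j : Fin l) (hij : i ≠ j) (vi vj : ℝ) :
    ∑ k, (if k = i then vi else if k = j then vj else f k)
      = (∑ k, f k) - f i - f j + vi + vj := by
  have h : ∀ k, (if k = i then vi else if k = j then vj else f k)
      = f k + (if k = i then vi - f i else 0) + (if k = j then vj - f j else 0) := by
    intro k
    by_cases h1 : k = i
    · subst h1; simp [hij]
    · by_cases h2 : k = j
      · subst h2
        rw [if_neg h1, if_neg h1, if_pos rfl, if_pos rfl]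
        ring
      · simp [h1, h2]
  rw [Finset.sum_congr rfl (fun k _ => h k)]
  rw [Finset.sum_add_distrib, Finset.sum_add_distrib]
  simp [Finset.sum_ite_eq' Finset.univ]
  ring

lemma shift_exists {l : ℕ} {d : Fin l → ℕ} (α : ℝ) (x : BlockVec d)
    (i j : Fin l) (hij : i ≠ j) (hi : x i ≠ 0) (hj : x j ≠ 0)
    (hiα : ‖x i‖ < α) (hjα : ‖x j‖ < α)
    (hxinf : ∀ k, ‖x k‖ ≤ α) (t : ℝ) (ht0 : 0 ≤ t)
    (hti : ‖x i‖ + t ≤ α) (htj : t ≤ ‖x j‖) :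
    ∃ a : BlockVec d,
      (∀ k, ‖a k‖ ≤ α) ∧ (∀ k, x k = 0 → a k = 0) ∧
      blockL1 a = blockL1 x ∧
      ‖a i‖ = ‖x i‖ + t ∧ ‖a j‖ = ‖x j‖ - t ∧
      a i = ((‖x i‖ + t)/‖x i‖) • x i ∧
      a j = ((‖x j‖ - t)/‖x j‖) • x j ∧
      (∀ k, k ≠ i → k ≠ j → a k = x k) ∧
      fracSet α a ⊆ fracSet α x := by
  have hci : 0 < ‖x i‖ := norm_pos_iff.mpr hi
  have hcj : 0 < ‖x j‖ := norm_pos_iff.mpr hj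
  set c : Fin l → ℝ := fun k => if k = i then (‖x i‖ + t)/‖x i‖
      else if k = j then (‖x j‖ - t)/‖x j‖ else 1 with hc
  set a : BlockVec d := WithLp.toLp 2 (fun k => c k • x k) with ha
  have hai : a i = ((‖x i‖ + t)/‖x i‖) • x i := by simp [ha, hc]
  have haj : a j = ((‖x j‖ - t)/‖x j‖) • x j := by
    show c j • x j = _
    rw [hc]; simp only []
    rw [if_neg (Ne.symm hij)]
    simp
  have hak : ∀ k, k ≠ i → k ≠ j → a k = x k := by
    intro k h1 h2; simp [ha, hc, h1, h2]
  have nai : ‖a i‖ = ‖x i‖ + t := by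
    rw [hai, norm_smul, Real.norm_eq_abs,
      abs_of_nonneg (div_nonneg (by linarith) hci.le), div_mul_cancel₀ _ hci.ne']
  have naj : ‖a j‖ = ‖x j‖ - t := by
    rw [haj, norm_smul, Real.norm_eq_abs,
      abs_of_nonneg (div_nonneg (by linarith) hcj.le), div_mul_cancel₀ _ hcj.ne']
  have hnorm : ∀ k, ‖a k‖ = if k = i then ‖x i‖ + t else if k = j then ‖x j‖ - t else ‖x k‖ := by
    intro k
    by_cases h1 : k = i
    · subst h1; simp [nai]
    · by_cases h2 : k = j
      · subst h2; simp [h1, naj]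
      · simp [h1, h2, hak k h1 h2]
  refine ⟨a, ?_, ?_, ?_, nai, naj, hai, haj, hak, ?_⟩
  · intro k
    rw [hnorm k]
    by_cases h1 : k = i
    · simp [h1, hti]
    · by_cases h2 : k = j
      · subst h2; rw [if_neg h1, if_pos rfl]; linarith
      · simp [h1, h2, hxinf k]
  · intro k hk
    rcases eq_or_ne k i with rfl | h1
    · exact absurd hk hi
    rcases eq_or_ne k j with rfl | h2
    · exact absurd hk hj
    · rw [hak k h1 h2]; exact hk
  · unfold blockL1
    rw [Finset.sum_congr rfl (fun k _ => hnorm k), sum_two_update _ i j hij]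
    ring
  · intro k hk
    simp only [fracSet, Finset.mem_filter, Finset.mem_univ, true_and] at hk ⊢
    rcases eq_or_ne k i with rfl | h1
    · exact ⟨hi, hiα⟩
    rcases eq_or_ne k j with rfl | h2
    · exact ⟨hj, hjα⟩
    · rwa [hak k h1 h2] at hk

set_option maxHeartbeats 2000000 in
lemma aux_decomp {l : ℕ} {d : Fin l → ℕ} (α : ℝ) (hα : 0 < α) :
    ∀ (n : ℕ) (x : BlockVec d), (∀ i, ‖x i‖ ≤ α) → (fracSet α x).card ≤ n →
    ∃ (K : ℕ) (lam : Fin K → ℝ) (u : Fin K → BlockVec d),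
      x = ∑ j, lam j • u j ∧
      (∀ j, 0 ≤ lam j ∧ lam j ≤ 1) ∧
      (∑ j, lam j = 1) ∧
      (∀ j, (∀ i, x i = 0 → u j i = 0) ∧
        blockL1 (u j) = blockL1 x ∧
        (∀ i, ‖u j i‖ ≤ α) ∧
        (fracSet α (u j)).card ≤ 1) := by
  have triv : ∀ x : BlockVec d, (∀ i, ‖x i‖ ≤ α) → (fracSet α x).card ≤ 1 →
      ∃ (K : ℕ) (lam : Fin K → ℝ) (u : Fin K → BlockVec d),
      x = ∑ j, lam j • u j ∧
      (∀ j, 0 ≤ lam j ∧ lam j ≤ 1) ∧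
      (∑ j, lam j = 1) ∧
      (∀ j, (∀ i, x i = 0 → u j i = 0) ∧
        blockL1 (u j) = blockL1 x ∧
        (∀ i, ‖u j i‖ ≤ α) ∧
        (fracSet α (u j)).card ≤ 1) := by
    intro x hinf hcard
    exact ⟨1, fun _ => 1, fun _ => x, by simp, by simp, by simp,
      fun j => ⟨fun i h => h, rfl, hinf, hcard⟩⟩
  intro n
  induction n with
  | zero =>
    intro x hinf hcard
    exact triv x hinf (le_trans hcard (by omega))
  | succ n ih =>
    intro x hinf hcard
    by_cases hc : (fracSet α x).card ≤ 1
    · exact triv x hinf hc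
    obtain ⟨i, hi_mem, j, hj_mem, hij⟩ := Finset.one_lt_card.mp (show 1 < (fracSet α x).card by omega)
    simp only [fracSet, Finset.mem_filter, Finset.mem_univ, true_and] at hi_mem hj_mem
    obtain ⟨hi, hiα⟩ := hi_mem
    obtain ⟨hj, hjα⟩ := hj_mem
    have hci : 0 < ‖x i‖ := norm_pos_iff.mpr hi
    have hcj : 0 < ‖x j‖ := norm_pos_iff.mpr hj
    set t : ℝ := min (α - ‖x i‖) ‖x j‖ with htdef
    set t' : ℝ := min ‖x i‖ (α - ‖x j‖) with ht'def
    have ht : 0 < t := lt_min (by linarith) hcj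
    have ht' : 0 < t' := lt_min hci (by linarith)
    have hts : 0 < t + t' := by linarith
    obtain ⟨a, hainf, hasupp, haL1, nai, naj, hai, haj, hak, hasub⟩ :=
      shift_exists α x i j hij hi hj hiα hjα hinf t ht.le
        (by have := min_le_left (α - ‖x i‖) ‖x j‖; linarith)
        (min_le_right _ _)
    obtain ⟨b, hbinf, hbsupp, hbL1, nbj, nbi, hbj, hbi, hbk, hbsub⟩ :=
      shift_exists α x j i hij.symm hj hi hjα hiα hinf t' ht'.le
        (by have := min_le_right ‖x i‖ (α - ‖x j‖); linarith)
        (min_le_left _ _)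
    -- card decrease for a
    have hcarda : (fracSet α a).card ≤ n := by
      have hstrict : fracSet α a ⊂ fracSet α x := by
        refine ⟨hasub, fun hsub => ?_⟩
        rcases min_cases (α - ‖x i‖) ‖x j‖ with ⟨he, _⟩ | ⟨he, _⟩
        · have hmem : i ∈ fracSet α x := by
            simp only [fracSet, Finset.mem_filter, Finset.mem_univ, true_and]
            exact ⟨hi, hiα⟩
          have : i ∈ fracSet α a := hsub hmem
          simp only [fracSet, Finset.mem_filter, Finset.mem_univ, true_and] at this
          have : ‖a i‖ < α := this.2
          rw [nai, htdef, he] at this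
          linarith
        · have hmem : j ∈ fracSet α x := by
            simp only [fracSet, Finset.mem_filter, Finset.mem_univ, true_and]
            exact ⟨hj, hjα⟩
          have hmem2 : j ∈ fracSet α a := hsub hmem
          simp only [fracSet, Finset.mem_filter, Finset.mem_univ, true_and] at hmem2
          have : ‖a j‖ = 0 := by rw [naj, htdef, he]; ring
          exact hmem2.1 (norm_eq_zero.mp this)
      have := Finset.card_lt_card hstrict
      omega
    have hcardb : (fracSet α b).card ≤ n := by
      have hstrict : fracSet α b ⊂ fracSet α x := by
        refine ⟨hbsub, fun hsub => ?_⟩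
        rcases min_cases ‖x i‖ (α - ‖x j‖) with ⟨he, _⟩ | ⟨he, _⟩
        · have hmem : i ∈ fracSet α x := by
            simp only [fracSet, Finset.mem_filter, Finset.mem_univ, true_and]
            exact ⟨hi, hiα⟩
          have hmem2 : i ∈ fracSet α b := hsub hmem
          simp only [fracSet, Finset.mem_filter, Finset.mem_univ, true_and] at hmem2
          have : ‖b i‖ = 0 := by rw [nbi, ht'def, he]; ring
          exact hmem2.1 (norm_eq_zero.mp this)
        · have hmem : j ∈ fracSet α x := by
            simp only [fracSet, Finset.mem_filter, Finset.mem_univ, true_and]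
            exact ⟨hj, hjα⟩
          have : j ∈ fracSet α b := hsub hmem
          simp only [fracSet, Finset.mem_filter, Finset.mem_univ, true_and] at this
          have : ‖b j‖ < α := this.2
          rw [nbj, ht'def, he] at this
          linarith
      have := Finset.card_lt_card hstrict
      omega
    obtain ⟨Ka, lamA, uA, hxa, hwA, hsumA, hpropA⟩ := ih a hainf hcarda
    obtain ⟨Kb, lamB, uB, hxb, hwB, hsumB, hpropB⟩ := ih b hbinf hcardb
    set lam : ℝ := t' / (t + t') with hlamdef
    have hlam0 : 0 ≤ lam := div_nonneg ht'.le hts.le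
    have hlam1 : lam ≤ 1 := by
      rw [hlamdef, div_le_one hts]; linarith
    -- convex identity
    have hx : x = lam • a + (1 - lam) • b := by
      refine PiLp.ext (fun k => ?_)
      show x k = lam • a k + (1 - lam) • b k
      rcases eq_or_ne k i with rfl | h1
      · rw [hai, hbi, smul_smul, smul_smul, ← add_smul]
        have key : lam * ((‖x k‖ + t) / ‖x k‖) + (1 - lam) * ((‖x k‖ - t') / ‖x k‖) = 1 := by
          rw [hlamdef]; field_simp; ring
        rw [key, one_smul]
      rcases eq_or_ne k j with rfl | h2
      · rw [haj, hbj, smul_smul, smul_smul, ← add_smul]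
        have key : lam * ((‖x k‖ - t) / ‖x k‖) + (1 - lam) * ((‖x k‖ + t') / ‖x k‖) = 1 := by
          rw [hlamdef]; field_simp; ring
        rw [key, one_smul]
      · rw [hak k h1 h2, hbk k h2 h1, ← add_smul]
        simp
    refine ⟨Ka + Kb,
      Fin.addCases (fun p => lam * lamA p) (fun p => (1 - lam) * lamB p),
      Fin.addCases uA uB, ?_, ?_, ?_, ?_⟩
    · rw [Fin.sum_univ_add]
      simp only [Fin.addCases_left, Fin.addCases_right]
      have e1 : ∀ p : Fin Ka, (lam * lamA p) • uA p = lam • (lamA p • uA p) := by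
        intro p; rw [smul_smul]
      have e2 : ∀ p : Fin Kb, ((1 - lam) * lamB p) • uB p = (1 - lam) • (lamB p • uB p) := by
        intro p; rw [smul_smul]
      rw [Finset.sum_congr rfl (fun p _ => e1 p), Finset.sum_congr rfl (fun p _ => e2 p),
        ← Finset.smul_sum, ← Finset.smul_sum, ← hxa, ← hxb]
      exact hx
    · intro j'
      refine Fin.addCases (fun p => ?_) (fun p => ?_) j' <;>
        simp only [Fin.addCases_left, Fin.addCases_right]
      · exact ⟨mul_nonneg hlam0 (hwA p).1,
          by nlinarith [(hwA p).1, (hwA p).2]⟩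
      · exact ⟨mul_nonneg (by linarith) (hwB p).1,
          by nlinarith [(hwB p).1, (hwB p).2]⟩
    · rw [Fin.sum_univ_add]
      simp only [Fin.addCases_left, Fin.addCases_right]
      rw [← Finset.mul_sum, ← Finset.mul_sum, hsumA, hsumB]
      ring
    · intro j'
      refine Fin.addCases (fun p => ?_) (fun p => ?_) j' <;>
        simp only [Fin.addCases_left, Fin.addCases_right]
      · obtain ⟨h1, h2, h3, h4⟩ := hpropA p
        exact ⟨fun i' hi' => h1 i' (hasupp i' hi'), h2.trans haL1, h3, h4⟩
      · obtain ⟨h1, h2, h3, h4⟩ := hpropB p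
        exact ⟨fun i' hi' => h1 i' (hbsupp i' hi'), h2.trans hbL1, h3, h4⟩

/-- Lemma 2.3, block polytope representation. -/
theorem block_polytope_convex_decomposition {l : ℕ} {d : Fin l → ℕ}
    (α : ℝ) (hα : 0 < α) (s : ℕ) (hs : 0 < s) (x : BlockVec d)
    (hinf : ∀ i, ‖x i‖ ≤ α) (hL1 : blockL1 x ≤ s * α) :
    ∃ (K : ℕ) (lam : Fin K → ℝ) (u : Fin K → BlockVec d),
      x = ∑ j, lam j • u j ∧
      (∀ j, 0 ≤ lam j ∧ lam j ≤ 1) ∧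
      (∑ j, lam j = 1) ∧
      (∀ j, BlockSparse s (u j) ∧
        (∀ i, x i = 0 → u j i = 0) ∧
        blockL1 (u j) = blockL1 x ∧
        (∀ i, ‖u j i‖ ≤ α)) ∧
      ∑ j, lam j * ‖u j‖ ^ 2 ≤ s * α ^ 2 := by
  classical
  obtain ⟨K, lam, u, hrep, hw, hsum, hprop⟩ :=
    aux_decomp α hα (fracSet α x).card x hinf le_rfl
  have hL1u : ∀ j, blockL1 (u j) ≤ s * α := by
    intro j; rw [(hprop j).2.1]; exact hL1
  refine ⟨K, lam, u, hrep, hw, hsum, ?_, ?_⟩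
  · intro j
    obtain ⟨hsupp, hL1eq, hinfu, hfrac⟩ := hprop j
    refine ⟨?_, hsupp, hL1eq, hinfu⟩
    set S : Finset (Fin l) := Finset.univ.filter (fun i => u j i ≠ 0) with hS
    set F : Finset (Fin l) := fracSet α (u j) with hF
    set A : Finset (Fin l) := S \ F with hA
    have hnormA : ∀ i ∈ A, ‖u j i‖ = α := by
      intro i hiA
      rw [hA, Finset.mem_sdiff, hS, hF] at hiA
      obtain ⟨hiS, hiF⟩ := hiA
      simp only [Finset.mem_filter, Finset.mem_univ, true_and] at hiS
      simp only [fracSet, Finset.mem_filter, Finset.mem_univ, true_and, not_and, not_lt] at hiF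
      exact le_antisymm (hinfu i) (hiF hiS)
    have hsumA : ∀ T : Finset (Fin l), (∑ i ∈ T, ‖u j i‖) ≤ blockL1 (u j) := by
      intro T
      exact Finset.sum_le_sum_of_subset_of_nonneg (Finset.subset_univ T)
        (fun i _ _ => norm_nonneg _)
    have hcardA : (A.card : ℝ) * α ≤ blockL1 (u j) := by
      calc (A.card : ℝ) * α = ∑ i ∈ A, α := by rw [Finset.sum_const, nsmul_eq_mul]
        _ = ∑ i ∈ A, ‖u j i‖ := Finset.sum_congr rfl (fun i hi => (hnormA i hi).symm)
        _ ≤ blockL1 (u j) := hsumA A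
    have hSsub : S ⊆ A ∪ (F ∩ S) := by
      intro i hiS
      by_cases hiF : i ∈ F
      · exact Finset.mem_union_right _ (Finset.mem_inter.mpr ⟨hiF, hiS⟩)
      · exact Finset.mem_union_left _ (Finset.mem_sdiff.mpr ⟨hiS, hiF⟩)
    by_cases hFS : (F ∩ S).Nonempty
    · obtain ⟨i₀, hi₀⟩ := hFS
      have hi₀F : i₀ ∈ F := (Finset.mem_inter.mp hi₀).1
      have hi₀S : i₀ ∈ S := (Finset.mem_inter.mp hi₀).2
      have hi₀A : i₀ ∉ A := by rw [hA]; simp [hi₀F]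
      have hpos : 0 < ‖u j i₀‖ := by
        rw [hS] at hi₀S
        simp only [Finset.mem_filter, Finset.mem_univ, true_and] at hi₀S
        exact norm_pos_iff.mpr hi₀S
      have hins : (A.card : ℝ) * α + ‖u j i₀‖ ≤ blockL1 (u j) := by
        calc (A.card : ℝ) * α + ‖u j i₀‖
            = (∑ i ∈ A, ‖u j i‖) + ‖u j i₀‖ := by
              rw [Finset.sum_congr rfl hnormA, Finset.sum_const, nsmul_eq_mul]
          _ = ∑ i ∈ insert i₀ A, ‖u j i‖ := by rw [Finset.sum_insert hi₀A]; ring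
          _ ≤ blockL1 (u j) := hsumA _
      have hlt : (A.card : ℝ) < s := by
        have := hL1u j
        have h2 : (A.card : ℝ) * α < (s : ℝ) * α := by linarith
        exact lt_of_mul_lt_mul_right h2 hα.le
      have hAle : A.card + 1 ≤ s := by exact_mod_cast Nat.add_one_le_iff.mpr (by exact_mod_cast hlt)
      refine ⟨S, ?_, fun i hi => by simpa [hS] using hi⟩
      calc S.card ≤ (A ∪ (F ∩ S)).card := Finset.card_le_card hSsub
        _ ≤ A.card + (F ∩ S).card := Finset.card_union_le _ _
        _ ≤ A.card + 1 := by
            have : (F ∩ S).card ≤ F.card := Finset.card_le_card (Finset.inter_subset_left)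
            omega
        _ ≤ s := hAle
    · have hFSe : F ∩ S = ∅ := Finset.not_nonempty_iff_eq_empty.mp hFS
      have hAle : (A.card : ℝ) ≤ s := by
        have := hL1u j
        have h2 : (A.card : ℝ) * α ≤ (s : ℝ) * α := by linarith
        exact le_of_mul_le_mul_right h2 hα
      refine ⟨S, ?_, fun i hi => by simpa [hS] using hi⟩
      calc S.card ≤ (A ∪ (F ∩ S)).card := Finset.card_le_card hSsub
        _ = A.card := by rw [hFSe, Finset.union_empty]
        _ ≤ s := by exact_mod_cast hAle
  · have hbound : ∀ j, ‖u j‖ ^ 2 ≤ s * α ^ 2 := by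
      intro j
      obtain ⟨hsupp, hL1eq, hinfu, hfrac⟩ := hprop j
      have e : ‖u j‖ ^ 2 = ∑ i, ‖u j i‖ ^ 2 :=
        PiLp.norm_sq_eq_of_L2 (fun i => EuclideanSpace ℝ (Fin (d i))) (u j)
      rw [e]
      calc ∑ i, ‖u j i‖ ^ 2 ≤ ∑ i, α * ‖u j i‖ := by
            refine Finset.sum_le_sum (fun i _ => ?_)
            rw [pow_two]
            exact mul_le_mul_of_nonneg_right (hinfu i) (norm_nonneg _)
        _ = α * blockL1 (u j) := by rw [blockL1, Finset.mul_sum]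
        _ ≤ α * (s * α) := by
            rw [hL1eq]
            exact mul_le_mul_of_nonneg_left hL1 hα.le
        _ = s * α ^ 2 := by ring
    calc ∑ j, lam j * ‖u j‖ ^ 2 ≤ ∑ j, lam j * (s * α ^ 2) :=
          Finset.sum_le_sum (fun j _ => mul_le_mul_of_nonneg_left (hbound j) (hw j).1)
      _ = (∑ j, lam j) * (s * α ^ 2) := by rw [Finset.sum_mul]
      _ = s * α ^ 2 := by rw [hsum, one_mul]
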